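/- Let n ≥ 3. In the Artin group A(Ã_{n-1}), the cycle relation fails: a_n·a_{n-1}⋯a_1 · a_n·a_{n-1}⋯a_3 ≠ a_{n-1}·a_{n-2}⋯a_1 · a_n·a_{n-1}⋯a_2. -/

import Mathlib

namespace Stmt5

/-- The braid relator `x y x (y x y)⁻¹` (weight 3). -/
def braidRel {γ : Type} (x y : FreeGroup γ) : FreeGroup γ := x * y * x * (y * x * y)⁻¹

/-- The commutation relator `x y (y x)⁻¹` (weight 2). -/
def commRel {γ : Type} (x y : FreeGroup γ) : FreeGroup γ := x * y * (y * x)⁻¹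

/-- Relations of the Artin group `A(Ã_{n-1})`: the generator indexed by `i : Fin n`
is `a_{i+1}`; cyclically adjacent generators braid, all other pairs commute. -/
def AtildeRels (n : ℕ) : Set (FreeGroup (Fin n)) :=
  { r | ∃ i j : Fin n,
      ((j : ℕ) = ((i : ℕ) + 1) % n ∧ r = braidRel (.of i) (.of j)) ∨
      (i ≠ j ∧ (j : ℕ) ≠ ((i : ℕ) + 1) % n ∧ (i : ℕ) ≠ ((j : ℕ) + 1) % n ∧
        r = commRel (.of i) (.of j)) }

/-- The Artin group `A(Ã_{n-1})`. -/
abbrev Atilde (n : ℕ) : Type := PresentedGroup (AtildeRels n)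

/-- The standard generator `a_i` (for `1 ≤ i ≤ n`) of `A(Ã_{n-1})`. -/
def a (n : ℕ) (i : ℕ) : Atilde n :=
  if h : 0 < n then PresentedGroup.of ⟨(i - 1) % n, Nat.mod_lt _ h⟩ else 1

/-- The descending product `a_m · a_{m-1} ⋯ a_k` in `A(Ã_{n-1})`. -/
def dprod (n : ℕ) (k m : ℕ) : Atilde n :=
  ((List.range' k (m + 1 - k)).reverse.map (a n)).prod

section Aux
variable (n : ℕ) (hn : 3 ≤ n)

def sfun (c : ZMod n) (x : ℤ) : ℤ :=
  if ((x : ZMod n) = c) then x + 1 else if ((x : ZMod n) = c + 1) then x - 1 else x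

lemma one_ne_zero' (hn : 3 ≤ n) : (1 : ZMod n) ≠ 0 := by
  haveI : NeZero n := ⟨by omega⟩
  intro h
  have h2 : ((1 : ℕ) : ZMod n) = 0 := by exact_mod_cast h
  rw [ZMod.natCast_eq_zero_iff] at h2
  have := Nat.le_of_dvd one_pos h2
  omega

lemma two_ne_zero' (hn : 3 ≤ n) : (2 : ZMod n) ≠ 0 := by
  haveI : NeZero n := ⟨by omega⟩
  intro h
  have h2 : ((2 : ℕ) : ZMod n) = 0 := by exact_mod_cast h
  rw [ZMod.natCast_eq_zero_iff] at h2
  have := Nat.le_of_dvd two_pos h2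
  omega

lemma sfun_invol (hn : 3 ≤ n) (c : ZMod n) : Function.Involutive (sfun n c) := by
  have h1 := one_ne_zero' n hn
  intro x
  unfold sfun
  split_ifs with h h' <;> push_cast <;> simp_all <;>
    intro hh <;> first | exact h1 (by first | linear_combination hh | linear_combination -hh | linear_combination 2*hh | linear_combination -2*hh) | first | exact h1 (by first | linear_combination hh | linear_combination -hh | linear_combination 2*hh | linear_combination -2*hh) | exact h2 (by first | linear_combination hh | linear_combination -hh | linear_combination 2*hh | linear_combination -2*hh)


noncomputable def sg (c : ZMod n) : Equiv.Perm ℤ :=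
  Function.Involutive.toPerm _ (sfun_invol n hn c)

lemma sg_apply (c : ZMod n) (x : ℤ) : sg n hn c x = sfun n c x := rfl

lemma sg_fst {c : ZMod n} {x : ℤ} (h : (x : ZMod n) = c) : sg n hn c x = x + 1 := by
  rw [sg_apply]; unfold sfun; rw [if_pos h]

lemma sg_snd {c : ZMod n} {x : ℤ} (h : (x : ZMod n) = c + 1) : sg n hn c x = x - 1 := by
  have h1 := one_ne_zero' n hn
  have hne : (x : ZMod n) ≠ c := by
    rw [h]; intro hh; first | exact h1 (by first | linear_combination hh | linear_combination -hh | linear_combination 2*hh | linear_combination -2*hh) | first | exact h1 (by first | linear_combination hh | linear_combination -hh | linear_combination 2*hh | linear_combination -2*hh) | exact h2 (by first | linear_combination hh | linear_combination -hh | linear_combination 2*hh | linear_combination -2*hh)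
  rw [sg_apply]; unfold sfun; rw [if_neg hne, if_pos h]

lemma sg_other {c : ZMod n} {x : ℤ} (h : (x : ZMod n) ≠ c) (h' : (x : ZMod n) ≠ c + 1) :
    sg n hn c x = x := by
  rw [sg_apply]; unfold sfun; rw [if_neg h, if_neg h']

lemma cast_add_one (x : ℤ) : ((x + 1 : ℤ) : ZMod n) = (x : ZMod n) + 1 := by push_cast; ring
lemma cast_sub_one (x : ℤ) : ((x - 1 : ℤ) : ZMod n) = (x : ZMod n) - 1 := by push_cast; ring

lemma sg_braid (c : ZMod n) :
    sg n hn c * sg n hn (c+1) * sg n hn c = sg n hn (c+1) * sg n hn c * sg n hn (c+1) := by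
  have h1 := one_ne_zero' n hn
  have h2 := two_ne_zero' n hn
  ext x
  simp only [Equiv.Perm.mul_apply]
  by_cases hc : (x : ZMod n) = c
  · have l1 : sg n hn c x = x + 1 := sg_fst n hn hc
    have l2 : sg n hn (c+1) (x+1) = x+1+1 := sg_fst n hn (by rw [cast_add_one, hc])
    have l3 : sg n hn c (x+1+1) = x+1+1 := sg_other n hn
      (by rw [cast_add_one, cast_add_one, hc]; intro hh; first | exact h1 (by first | linear_combination hh | linear_combination -hh | linear_combination 2*hh | linear_combination -2*hh) | exact h2 (by first | linear_combination hh | linear_combination -hh | linear_combination 2*hh | linear_combination -2*hh))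
      (by rw [cast_add_one, cast_add_one, hc]; intro hh; first | exact h1 (by first | linear_combination hh | linear_combination -hh | linear_combination 2*hh | linear_combination -2*hh) | first | exact h1 (by first | linear_combination hh | linear_combination -hh | linear_combination 2*hh | linear_combination -2*hh) | exact h2 (by first | linear_combination hh | linear_combination -hh | linear_combination 2*hh | linear_combination -2*hh))
    have r1 : sg n hn (c+1) x = x := sg_other n hn
      (by rw [hc]; intro hh; first | exact h1 (by first | linear_combination hh | linear_combination -hh | linear_combination 2*hh | linear_combination -2*hh) | first | exact h1 (by first | linear_combination hh | linear_combination -hh | linear_combination 2*hh | linear_combination -2*hh) | exact h2 (by first | linear_combination hh | linear_combination -hh | linear_combination 2*hh | linear_combination -2*hh))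
      (by rw [hc]; intro hh; first | exact h1 (by first | linear_combination hh | linear_combination -hh | linear_combination 2*hh | linear_combination -2*hh) | exact h2 (by first | linear_combination hh | linear_combination -hh | linear_combination 2*hh | linear_combination -2*hh))
    rw [l1, l2, l3, r1, l1, l2]
  by_cases hc1 : (x : ZMod n) = c + 1
  · have l1 : sg n hn c x = x - 1 := sg_snd n hn hc1
    have l2 : sg n hn (c+1) (x-1) = x - 1 := sg_other n hn
      (by rw [cast_sub_one, hc1]; intro hh; first | exact h1 (by first | linear_combination hh | linear_combination -hh | linear_combination 2*hh | linear_combination -2*hh) | first | exact h1 (by first | linear_combination hh | linear_combination -hh | linear_combination 2*hh | linear_combination -2*hh) | exact h2 (by first | linear_combination hh | linear_combination -hh | linear_combination 2*hh | linear_combination -2*hh))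
      (by rw [cast_sub_one, hc1]; intro hh; first | exact h1 (by first | linear_combination hh | linear_combination -hh | linear_combination 2*hh | linear_combination -2*hh) | exact h2 (by first | linear_combination hh | linear_combination -hh | linear_combination 2*hh | linear_combination -2*hh))
    have l3 : sg n hn c (x-1) = x - 1 + 1 := sg_fst n hn (by rw [cast_sub_one, hc1]; try ring)
    have r1 : sg n hn (c+1) x = x + 1 := sg_fst n hn hc1
    have r2 : sg n hn c (x+1) = x + 1 := sg_other n hn
      (by rw [cast_add_one, hc1]; intro hh; first | exact h1 (by first | linear_combination hh | linear_combination -hh | linear_combination 2*hh | linear_combination -2*hh) | first | exact h1 (by first | linear_combination hh | linear_combination -hh | linear_combination 2*hh | linear_combination -2*hh) | exact h2 (by first | linear_combination hh | linear_combination -hh | linear_combination 2*hh | linear_combination -2*hh))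
      (by rw [cast_add_one, hc1]; intro hh; first | exact h1 (by first | linear_combination hh | linear_combination -hh | linear_combination 2*hh | linear_combination -2*hh) | first | exact h1 (by first | linear_combination hh | linear_combination -hh | linear_combination 2*hh | linear_combination -2*hh) | exact h2 (by first | linear_combination hh | linear_combination -hh | linear_combination 2*hh | linear_combination -2*hh))
    have r3 : sg n hn (c+1) (x+1) = x + 1 - 1 := sg_snd n hn (by rw [cast_add_one, hc1]; try ring)
    rw [l1, l2, l3, r1, r2, r3]
    ring
  by_cases hc2 : (x : ZMod n) = c + 1 + 1
  · have l1 : sg n hn c x = x := sg_other n hn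
      (by rw [hc2]; intro hh; first | exact h1 (by first | linear_combination hh | linear_combination -hh | linear_combination 2*hh | linear_combination -2*hh) | exact h2 (by first | linear_combination hh | linear_combination -hh | linear_combination 2*hh | linear_combination -2*hh))
      (by rw [hc2]; intro hh; first | exact h1 (by first | linear_combination hh | linear_combination -hh | linear_combination 2*hh | linear_combination -2*hh) | first | exact h1 (by first | linear_combination hh | linear_combination -hh | linear_combination 2*hh | linear_combination -2*hh) | exact h2 (by first | linear_combination hh | linear_combination -hh | linear_combination 2*hh | linear_combination -2*hh))
    have l2 : sg n hn (c+1) x = x - 1 := sg_snd n hn hc2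
    have l3 : sg n hn c (x-1) = x - 1 - 1 := sg_snd n hn (by rw [cast_sub_one, hc2]; try ring)
    have r2 : sg n hn (c+1) (x-1-1) = x - 1 - 1 := sg_other n hn
      (by rw [cast_sub_one, cast_sub_one, hc2]; intro hh; first | exact h1 (by first | linear_combination hh | linear_combination -hh | linear_combination 2*hh | linear_combination -2*hh) | exact h2 (by first | linear_combination hh | linear_combination -hh | linear_combination 2*hh | linear_combination -2*hh))
      (by rw [cast_sub_one, cast_sub_one, hc2]; intro hh; first | exact h1 (by first | linear_combination hh | linear_combination -hh | linear_combination 2*hh | linear_combination -2*hh) | first | exact h1 (by first | linear_combination hh | linear_combination -hh | linear_combination 2*hh | linear_combination -2*hh) | exact h2 (by first | linear_combination hh | linear_combination -hh | linear_combination 2*hh | linear_combination -2*hh))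
    rw [l1, l2, l3, r2]
  · have l1 : sg n hn c x = x := sg_other n hn hc hc1
    have l2 : sg n hn (c+1) x = x := sg_other n hn hc1 hc2
    simp only [l1, l2]

lemma sg_comm {c d : ZMod n} (hcd : c ≠ d) (h1 : d ≠ c + 1) (h2 : c ≠ d + 1) :
    sg n hn c * sg n hn d = sg n hn d * sg n hn c := by
  ext x
  simp only [Equiv.Perm.mul_apply]
  by_cases hc : (x : ZMod n) = c
  · have l1 : sg n hn c x = x + 1 := sg_fst n hn hc
    have l2 : sg n hn d (x+1) = x + 1 := sg_other n hn
      (by rw [cast_add_one, hc]; intro hh; first | exact h1 (by first | linear_combination hh | linear_combination -hh | linear_combination 2*hh | linear_combination -2*hh) | exact h2 (by first | linear_combination hh | linear_combination -hh | linear_combination 2*hh | linear_combination -2*hh))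
      (by rw [cast_add_one, hc]; intro hh; exact hcd (by first | linear_combination hh | linear_combination -hh | linear_combination 2*hh | linear_combination -2*hh))
    have r1 : sg n hn d x = x := sg_other n hn
      (by rw [hc]; intro hh; exact hcd hh) (by rw [hc]; intro hh; exact h2 hh)
    rw [r1, l1, l2]
  by_cases hc1 : (x : ZMod n) = c + 1
  · have l1 : sg n hn c x = x - 1 := sg_snd n hn hc1
    have l2 : sg n hn d (x-1) = x - 1 := sg_other n hn
      (by rw [cast_sub_one, hc1]; intro hh; exact hcd (by first | linear_combination hh | linear_combination -hh | linear_combination 2*hh | linear_combination -2*hh))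
      (by rw [cast_sub_one, hc1]; intro hh; first | exact h1 (by first | linear_combination hh | linear_combination -hh | linear_combination 2*hh | linear_combination -2*hh) | first | exact h1 (by first | linear_combination hh | linear_combination -hh | linear_combination 2*hh | linear_combination -2*hh) | exact h2 (by first | linear_combination hh | linear_combination -hh | linear_combination 2*hh | linear_combination -2*hh))
    have r1 : sg n hn d x = x := sg_other n hn
      (by rw [hc1]; intro hh; exact h1 hh.symm)
      (by rw [hc1]; intro hh; exact hcd (by first | linear_combination hh | linear_combination -hh | linear_combination 2*hh | linear_combination -2*hh))
    rw [r1, l1, l2]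
  by_cases hd : (x : ZMod n) = d
  · have l1 : sg n hn c x = x := sg_other n hn hc hc1
    have r1 : sg n hn d x = x + 1 := sg_fst n hn hd
    have r2 : sg n hn c (x+1) = x + 1 := sg_other n hn
      (by rw [cast_add_one, hd]; intro hh; exact h2 hh.symm)
      (by rw [cast_add_one, hd]; intro hh; exact hcd (by linear_combination -hh))
    rw [l1, r1, r2]
  by_cases hd1 : (x : ZMod n) = d + 1
  · have l1 : sg n hn c x = x := sg_other n hn hc hc1
    have r1 : sg n hn d x = x - 1 := sg_snd n hn hd1
    have r2 : sg n hn c (x-1) = x - 1 := sg_other n hn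
      (by rw [cast_sub_one, hd1]; intro hh; exact hcd (by linear_combination -hh))
      (by rw [cast_sub_one, hd1]; intro hh; exact h1 (by linear_combination hh))
    rw [l1, r1, r2]
  · have l1 : sg n hn c x = x := sg_other n hn hc hc1
    have r1 : sg n hn d x = x := sg_other n hn hd hd1
    simp only [l1, r1]


lemma cast_eq_cast_iff (hn : 3 ≤ n) {u v : ℕ} (hu : u < n) (hv : v < n) :
    ((u : ZMod n) = (v : ZMod n)) ↔ u = v := by
  haveI : NeZero n := ⟨by omega⟩
  constructor
  · intro h
    have := congrArg ZMod.val h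
    rwa [ZMod.val_natCast, ZMod.val_natCast, Nat.mod_eq_of_lt hu, Nat.mod_eq_of_lt hv] at this
  · intro h; rw [h]


lemma rels_hold : ∀ r ∈ AtildeRels n,
    FreeGroup.lift (fun i : Fin n => sg n hn ((i : ℕ) : ZMod n)) r = 1 := by
  haveI : NeZero n := ⟨by omega⟩
  rintro r ⟨i, j, ⟨hj, hr⟩ | ⟨hij, hji1, hij1, hr⟩⟩
  · subst hr
    unfold braidRel
    simp only [map_mul, map_inv, FreeGroup.lift_apply_of]
    have hcast : ((j : ℕ) : ZMod n) = ((i : ℕ) : ZMod n) + 1 := by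
      rw [hj, ZMod.natCast_mod]; push_cast; ring
    rw [hcast, mul_inv_eq_one]
    exact sg_braid n hn _
  · subst hr
    unfold commRel
    simp only [map_mul, map_inv, FreeGroup.lift_apply_of]
    rw [mul_inv_eq_one]
    apply sg_comm n hn
    · intro h
      exact hij (Fin.ext ((cast_eq_cast_iff n hn i.isLt j.isLt).mp h))
    · intro h
      apply hji1
      have : ((j : ℕ) : ZMod n) = ((((i : ℕ) + 1) % n : ℕ) : ZMod n) := by
        rw [ZMod.natCast_mod]; push_cast; rw [h]
      exact (cast_eq_cast_iff n hn j.isLt (Nat.mod_lt _ (by omega))).mp this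
    · intro h
      apply hij1
      have : ((i : ℕ) : ZMod n) = ((((j : ℕ) + 1) % n : ℕ) : ZMod n) := by
        rw [ZMod.natCast_mod]; push_cast; rw [h]
      exact (cast_eq_cast_iff n hn i.isLt (Nat.mod_lt _ (by omega))).mp this

/-- The homomorphism to the affine symmetric group (inside `Equiv.Perm ℤ`). -/
noncomputable def F : Atilde n →* Equiv.Perm ℤ := PresentedGroup.toGroup (rels_hold n hn)

noncomputable def T (i : ℕ) : Equiv.Perm ℤ := sg n hn (((i - 1 : ℕ)) : ZMod n)

lemma F_a (i : ℕ) : F n hn (a n i) = T n hn i := by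
  unfold a F
  rw [dif_pos (by omega : 0 < n), PresentedGroup.toGroup.of]
  show sg n hn _ = _
  unfold T
  congr 1
  exact ZMod.natCast_mod _ n

noncomputable def Q (k len : ℕ) : Equiv.Perm ℤ :=
  ((List.range' k len).reverse.map (T n hn)).prod

lemma F_dprod (k m : ℕ) : F n hn (dprod n k m) = Q n hn k (m + 1 - k) := by
  unfold dprod Q
  rw [map_list_prod]
  congr 1
  simp [List.map_map, Function.comp_def, F_a]

lemma Q_zero (k : ℕ) : Q n hn k 0 = 1 := rfl

lemma Q_succ_low (k len : ℕ) : Q n hn k (len + 1) = Q n hn (k + 1) len * T n hn k := by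
  unfold Q
  rw [List.range'_succ]
  simp

lemma Q_succ_high (k len : ℕ) : Q n hn k (len + 1) = T n hn (k + len) * Q n hn k len := by
  unfold Q
  rw [← List.range'_append_1 (s := k) (m := len) (n := 1)]
  simp

lemma Q_chain : ∀ len k : ℕ, ∀ x : ℤ, 1 ≤ k →
    ((x : ZMod n) = ((k : ℕ) : ZMod n) - 1) → Q n hn k len x = x + len := by
  intro len
  induction len with
  | zero => intro k x _ _; rw [Q_zero]; simp
  | succ len ih =>
    intro k x hk hx
    rw [Q_succ_low, Equiv.Perm.mul_apply]
    have hT : T n hn k x = x + 1 := by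
      apply sg_fst
      rw [hx]
      rw [Nat.cast_sub (by omega : 1 ≤ k)]
      push_cast
      ring
    rw [hT, ih (k + 1) (x + 1) (by omega) (by rw [cast_add_one, hx]; push_cast; ring)]
    push_cast
    ring

lemma Q_fix : ∀ len k : ℕ, ∀ x : ℤ,
    (∀ j, k ≤ j → j < k + len →
      ((x : ZMod n) ≠ ((j - 1 : ℕ) : ZMod n) ∧ (x : ZMod n) ≠ ((j - 1 : ℕ) : ZMod n) + 1)) →
    Q n hn k len x = x := by
  intro len
  induction len with
  | zero => intro k x _; rw [Q_zero]; rfl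
  | succ len ih =>
    intro k x hcond
    rw [Q_succ_low, Equiv.Perm.mul_apply]
    have hT : T n hn k x = x :=
      sg_other n hn (hcond k le_rfl (by omega)).1 (hcond k le_rfl (by omega)).2
    rw [hT]
    exact ih (k + 1) x (fun j hj hj' => hcond j (by omega) (by omega))

end Aux

/-- For `n ≥ 3` the cycle relation fails in `A(Ã_{n-1})`:
`a_n ⋯ a_1 · a_n ⋯ a_3 ≠ a_{n-1} ⋯ a_1 · a_n ⋯ a_2`. -/
theorem cycle_relation_fails (n : ℕ) (hn : 3 ≤ n) :
    dprod n 1 n * dprod n 3 n ≠ dprod n 1 (n - 1) * dprod n 2 n := by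
  haveI : NeZero n := ⟨by omega⟩
  intro h
  have h' := congrArg (fun z => F n hn z (1 : ℤ)) h
  simp only [map_mul, Equiv.Perm.mul_apply] at h'
  rw [F_dprod, F_dprod, F_dprod, F_dprod] at h'
  -- left side
  have hA : Q n hn 3 (n + 1 - 3) (1 : ℤ) = 1 := by
    apply Q_fix
    intro j hj hj'
    constructor
    · intro hh
      have : (1 : ℕ) = j - 1 := by
        apply (cast_eq_cast_iff n hn (by omega) (by omega)).mp
        exact_mod_cast hh
      omega
    · intro hh
      have h0 : ((j - 1 : ℕ) : ZMod n) = ((0 : ℕ) : ZMod n) := by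
        push_cast
        linear_combination -hh
      have := (cast_eq_cast_iff n hn (by omega) (by omega)).mp h0
      omega
  have hB1 : Q n hn 2 (n - 2) (0 : ℤ) = 0 := by
    apply Q_fix
    intro j hj hj'
    constructor
    · intro hh
      have : (0 : ℕ) = j - 1 := by
        apply (cast_eq_cast_iff n hn (by omega) (by omega)).mp
        exact_mod_cast hh
      omega
    · intro hh
      have h0 : ((j : ℕ) : ZMod n) = ((0 : ℕ) : ZMod n) := by
        have hj1 : ((j - 1 : ℕ) : ZMod n) = ((j : ℤ) : ZMod n) - 1 := by
          rw [Nat.cast_sub (by omega : 1 ≤ j)]; push_cast; ring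
        push_cast
        push_cast at hj1
        linear_combination -hh - hj1
      have := (cast_eq_cast_iff n hn (by omega) (by omega)).mp h0
      omega
  have hB2 : Q n hn 1 (n - 1) (1 : ℤ) = 0 := by
    have hsplit : n - 1 = (n - 2) + 1 := by omega
    rw [hsplit, Q_succ_low, Equiv.Perm.mul_apply]
    have hT : T n hn 1 (1 : ℤ) = 0 := by
      have : T n hn 1 (1 : ℤ) = 1 - 1 := by
        apply sg_snd
        push_cast
        simp
      rw [this]; ring
    rw [hT]
    exact hB1
  have hB : Q n hn 1 (n + 1 - 1) (1 : ℤ) = -1 := by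
    have hsplit : n + 1 - 1 = (n - 1) + 1 := by omega
    rw [hsplit, Q_succ_high, Equiv.Perm.mul_apply, hB2]
    have h1n : 1 + (n - 1) = n := by omega
    rw [h1n]
    have : T n hn n (0 : ℤ) = 0 - 1 := by
      apply sg_snd
      have : ((n - 1 : ℕ) : ZMod n) + 1 = ((n : ℕ) : ZMod n) := by
        rw [Nat.cast_sub (by omega : 1 ≤ n)]; push_cast; ring
      rw [this, ZMod.natCast_self]
      push_cast
      ring
    rw [this]; ring
  -- right side
  have hC : Q n hn 2 (n + 1 - 2) (1 : ℤ) = 1 + (n + 1 - 2 : ℕ) := by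
    apply Q_chain
    · omega
    · push_cast; ring
  have hD : Q n hn 1 ((n - 1) + 1 - 1) ((1 : ℤ) + (n + 1 - 2 : ℕ)) = 
      (1 + (n + 1 - 2 : ℕ) : ℤ) + ((n - 1) + 1 - 1 : ℕ) := by
    apply Q_chain
    · omega
    · have hxn : ((1 : ℤ) + (n + 1 - 2 : ℕ)) = ((n : ℕ) : ℤ) := by
        rw [Nat.cast_sub (by omega : 2 ≤ n + 1)]; push_cast; ring
      rw [hxn]
      push_cast
      simp
  rw [hA, hB, hC, hD] at h'
  have e1 : ((n + 1 - 2 : ℕ) : ℤ) = (n : ℤ) - 1 := by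
    rw [Nat.cast_sub (by omega : 2 ≤ n + 1)]; push_cast; ring
  have e2 : (((n - 1) + 1 - 1 : ℕ) : ℤ) = (n : ℤ) - 1 := by
    have : (n - 1) + 1 - 1 = n - 1 := by omega
    rw [this, Nat.cast_sub (by omega : 1 ≤ n)]; push_cast; ring
  rw [e1, e2] at h'
  have hge : (3 : ℤ) ≤ (n : ℤ) := by exact_mod_cast hn
  omega

end Stmt5
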